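/- arXiv:0711.2571 — 3 statements merged into one kernel-verified Lean document; each statement's English description precedes it below -/
import Mathlib

section
/- For all integers m ≥ 2 and n ≥ 2, the complete bipartite graph K_{m−1, n−1} contains no Jahangir graph J_{2m} as a subgraph. -/
open SimpleGraph

/-- `G` is contained in `F` as a (not necessarily induced) subgraph, i.e. there is an
injective graph homomorphism from `G` into `F`. -/
def Contains {α : Type*} {β : Type*} (G : SimpleGraph α) (F : SimpleGraph β) : Prop :=
  ∃ f : α → β, Function.Injective f ∧ ∀ ⦃a b : α⦄, G.Adj a b → F.Adj (f a) (f b)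

/-- The Jahangir graph `J_{2m}` on `2m+1` vertices: a cycle on the vertices
`0, 1, …, 2m-1` together with one additional hub vertex (index `2m`) adjacent to the
alternate cycle vertices `0, 2, …, 2m-2`. -/
def jahangir (m : ℕ) : SimpleGraph (Fin (2 * m + 1)) :=
  SimpleGraph.fromRel (fun a b =>
    (a.val < 2 * m ∧ b.val < 2 * m ∧ b.val = (a.val + 1) % (2 * m)) ∨
    (a.val = 2 * m ∧ b.val < 2 * m ∧ b.val % 2 = 0))

/-- The disjoint union of `k` copies of the graph `G`. -/
def kCopies {α : Type*} (k : ℕ) (G : SimpleGraph α) : SimpleGraph (Fin k × α) where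
  Adj a b := a.1 = b.1 ∧ G.Adj a.2 b.2
  symm := ⟨fun _ _ h => ⟨h.1.symm, h.2.symm⟩⟩
  loopless := ⟨fun a h => G.loopless.irrefl a.2 h.2⟩

/-- The disjoint union `K_a ⊔ K_b` of two complete graphs. -/
def twoCliques (a b : ℕ) : SimpleGraph (Fin a ⊕ Fin b) :=
  SimpleGraph.fromRel (fun x y => x.isLeft = y.isLeft)

/-- `ramseyProp G H N` says that every simple graph `F` on `N` vertices contains `G`
as a subgraph, or its complement contains `H` as a subgraph.  The Ramsey number
`R(G, H)` is the least `N` with this property. -/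
def ramseyProp {α : Type*} {β : Type*} (G : SimpleGraph α) (H : SimpleGraph β) (N : ℕ) : Prop :=
  ∀ F : SimpleGraph (Fin N), Contains G F ∨ Contains H Fᶜ

/-- For `m ≥ 2` and `n ≥ 2`, the complete bipartite graph `K_{m-1,n-1}` contains no
Jahangir graph `J_{2m}`. -/
theorem jahangir_not_in_completeBipartite (m n : ℕ) (hm : 2 ≤ m) (hn : 2 ≤ n) :
    ¬ Contains (jahangir m) (completeBipartiteGraph (Fin (m - 1)) (Fin (n - 1))) := by
  rintro ⟨f, hinj, hmap⟩
  set hub : Fin (2 * m + 1) := ⟨2 * m, by omega⟩ with hhub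
  have he : ∀ i : Fin m, 2 * i.val < 2 * m + 1 := fun i => by omega
  have ho : ∀ i : Fin m, 2 * i.val + 1 < 2 * m + 1 := fun i => by have := i.isLt; omega
  set e : Fin m → Fin (2 * m + 1) := fun i => ⟨2 * i.val, he i⟩ with hedef
  set o : Fin m → Fin (2 * m + 1) := fun i => ⟨2 * i.val + 1, ho i⟩ with hodef
  have hub_adj : ∀ i : Fin m, (jahangir m).Adj hub (e i) := by
    intro i
    have hi := i.isLt
    rw [jahangir, fromRel_adj]
    constructor
    · intro h
      have := congrArg Fin.val h
      simp [hhub, hedef] at this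
      omega
    · left; right
      refine ⟨rfl, ?_, ?_⟩ <;> simp [hedef] <;> omega
  have cyc_adj : ∀ i : Fin m, (jahangir m).Adj (e i) (o i) := by
    intro i
    have hi := i.isLt
    rw [jahangir, fromRel_adj]
    constructor
    · intro h
      have := congrArg Fin.val h
      simp [hedef, hodef] at this
    · left; left
      refine ⟨?_, ?_, ?_⟩
      · simp only [hedef]; omega
      · simp only [hodef]; omega
      · simp only [hedef, hodef]
        rw [Nat.mod_eq_of_lt (by omega)]
  rcases hfh : f hub with x | y
  · -- hub on the left: all evens go right, all odds go left
    have hev : ∀ i : Fin m, ∃ b, f (e i) = Sum.inr b := by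
      intro i
      have := hmap (hub_adj i)
      rw [hfh] at this
      rcases this with ⟨_, h2⟩ | ⟨h1, _⟩
      · exact Sum.isRight_iff.mp h2
      · simp at h1
    have hod : ∀ i : Fin m, ∃ a, f (o i) = Sum.inl a := by
      intro i
      have := hmap (cyc_adj i)
      obtain ⟨b, hb⟩ := hev i
      rw [hb] at this
      rcases this with ⟨h1, _⟩ | ⟨_, h2⟩
      · simp at h1
      · exact Sum.isLeft_iff.mp h2
    choose g hg using hod
    have ginj : Function.Injective (fun i : Option (Fin m) =>
        i.elim x g) := by
      rintro (_ | i) (_ | j) h <;> simp only [Option.elim] at h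
      · rfl
      · exfalso
        have : f (o j) = f hub := by rw [hg j, hfh, h]
        have := congrArg Fin.val (hinj this)
        simp [hodef, hhub] at this
        have := j.isLt; omega
      · exfalso
        have : f (o i) = f hub := by rw [hg i, hfh, h]
        have := congrArg Fin.val (hinj this)
        simp [hodef, hhub] at this
        have := i.isLt; omega
      · have : f (o i) = f (o j) := by rw [hg i, hg j, h]
        have := congrArg Fin.val (hinj this)
        simp only [hodef] at this
        have : i.val = j.val := by omega
        exact congrArg _ (Fin.ext this)
    have hcard := Fintype.card_le_of_injective _ ginj
    simp [Fintype.card_option] at hcard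
    omega
  · -- hub on the right: all evens go left
    have hev : ∀ i : Fin m, ∃ a, f (e i) = Sum.inl a := by
      intro i
      have := hmap (hub_adj i)
      rw [hfh] at this
      rcases this with ⟨h1, _⟩ | ⟨_, h2⟩
      · simp at h1
      · exact Sum.isLeft_iff.mp h2
    choose g hg using hev
    have ginj : Function.Injective g := by
      intro i j h
      have : f (e i) = f (e j) := by rw [hg i, hg j, h]
      have := congrArg Fin.val (hinj this)
      simp only [hedef] at this
      exact Fin.ext (by omega)
    have hcard := Fintype.card_le_of_injective _ ginj
    simp at hcard
    omega
end

section
/- For all integers n ≥ 4 and k ≥ 1 with (n,k) ≠ (4,1), the Ramsey number R(kP_n, J_4) equals kn + 1. -/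
open SimpleGraph

/-- path embedding of length `l` (vertices `p 0, …, p (l-1)`). -/
def IsPE {V : Type*} (F : SimpleGraph V) (l : ℕ) (p : ℕ → V) : Prop :=
  (∀ i j, i < l → j < l → p i = p j → i = j) ∧ ∀ i, i + 1 < l → F.Adj (p i) (p (i+1))

namespace IsPE
variable {V : Type*} {F : SimpleGraph V} {l : ℕ} {p : ℕ → V}

theorem mono {l' : ℕ} (h : IsPE F l p) (hl : l' ≤ l) : IsPE F l' p :=
  ⟨fun i j hi hj => h.1 i j (hi.trans_le hl) (hj.trans_le hl),
   fun i hi => h.2 i (lt_of_lt_of_le hi hl)⟩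

theorem le_card [Fintype V] (h : IsPE F l p) : l ≤ Fintype.card V := by
  classical
  have : Function.Injective (fun i : Fin l => p i.val) := by
    intro i j hij
    exact Fin.ext (h.1 i.val j.val i.isLt j.isLt hij)
  simpa using Fintype.card_le_of_injective _ this

theorem reverse (h : IsPE F l p) : IsPE F l (fun i => p (l - 1 - i)) := by
  constructor
  · intro i j hi hj hij
    have := h.1 _ _ (by omega : l - 1 - i < l) (by omega : l - 1 - j < l) hij
    omega
  · intro i hi
    have h2 := h.2 (l - 1 - (i+1)) (by omega)
    have e : l - 1 - (i+1) + 1 = l - 1 - i := by omega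
    rw [e] at h2
    exact h2.symm

end IsPE
section constructions
variable {V : Type*} {F : SimpleGraph V} {l : ℕ} {p : ℕ → V} {u v : V}

/-- prepend a new vertex adjacent to the head -/
theorem pe_prepend (hp : IsPE F l p) (hu : ∀ i, i < l → p i ≠ u)
    (h : F.Adj u (p 0)) (hl : 0 < l) :
    IsPE F (l+1) (fun j => if j = 0 then u else p (j-1)) := by
  constructor
  · intro i j hi hj hij
    simp only at hij
    split_ifs at hij with h1 h2 h2
    · omega
    · exact absurd hij.symm (hu (j-1) (by omega))
    · exact absurd hij (hu (i-1) (by omega))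
    · have := hp.1 (i-1) (j-1) (by omega) (by omega) hij; omega
  · intro i hi
    simp only
    rcases Nat.eq_zero_or_pos i with h0 | h0
    · subst h0; simpa using h
    · have := hp.2 (i-1) (by omega)
      have e : i - 1 + 1 = i := by omega
      rw [e] at this
      simpa [Nat.pos_iff_ne_zero.mp h0] using this

/-- insert `u` between positions `i0` and `i0+1` -/
theorem pe_insert (hp : IsPE F l p) (hu : ∀ i, i < l → p i ≠ u)
    {i0 : ℕ} (hi0 : i0 + 1 < l) (h1 : F.Adj u (p i0)) (h2 : F.Adj u (p (i0+1))) :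
    IsPE F (l+1) (fun j => if j ≤ i0 then p j else if j = i0+1 then u else p (j-1)) := by
  constructor
  · intro i j hi hj hij
    simp only at hij
    split_ifs at hij with a1 a2 a2 a3 a3
    · exact hp.1 i j (by omega) (by omega) hij
    · exact absurd hij (hu i (by omega))
    · have := hp.1 i (j-1) (by omega) (by omega) hij; omega
    · exact absurd hij.symm (hu j (by omega))
    · omega
    · exact absurd hij.symm (hu (j-1) (by omega))
    · have := hp.1 (i-1) j (by omega) (by omega) hij; omega
    · exact absurd hij (hu (i-1) (by omega))
    · have := hp.1 (i-1) (j-1) (by omega) (by omega) hij; omega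
  · intro i hi
    simp only
    rcases lt_trichotomy i i0 with hc | hc | hc
    · have e1 : i ≤ i0 := by omega
      have e2 : i + 1 ≤ i0 := by omega
      simp only [if_pos e1, if_pos e2]
      exact hp.2 i (by omega)
    · subst hc
      simp only [le_refl, if_pos, if_neg (by omega : ¬ i + 1 ≤ i), if_pos rfl]
      exact h1.symm
    · rcases Nat.eq_or_lt_of_le hc with hc2 | hc2
      · have e : i = i0 + 1 := by omega
        subst e
        simp only [if_neg (by omega : ¬ i0 + 1 ≤ i0), if_pos rfl,
          if_neg (by omega : ¬ i0 + 1 + 1 ≤ i0), if_neg (by omega : ¬ i0 + 1 + 1 = i0 + 1)]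
        have e2 : i0 + 1 + 1 - 1 = i0 + 1 := by omega
        rw [e2]
        exact h2
      · simp only [if_neg (by omega : ¬ i ≤ i0), if_neg (by omega : ¬ i = i0 + 1),
          if_neg (by omega : ¬ i + 1 ≤ i0), if_neg (by omega : ¬ i + 1 = i0 + 1)]
        have := hp.2 (i-1) (by omega)
        have e : i - 1 + 1 = i := by omega
        rw [e] at this
        have e2 : i + 1 - 1 = i := by omega
        rw [e2]
        exact this

/-- path `p0 p1 u v p2 p3 … p(l-1)`, length `l+2` -/
theorem pe_PA (hp : IsPE F l p) (hu : ∀ i, i < l → p i ≠ u) (hv : ∀ i, i < l → p i ≠ v)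
    (huv : u ≠ v) (hl : 4 ≤ l)
    (h1 : F.Adj u (p 1)) (h2 : F.Adj v (p 2)) (h3 : F.Adj u v) :
    IsPE F (l+2) (fun j => if j < 2 then p j else if j = 2 then u else if j = 3 then v
      else p (j-2)) := by
  constructor
  · intro i j hi hj hij
    simp only at hij
    split_ifs at hij with a1 a2 a2 a3 a3 a4 a4 a5 a6 a6 a7 a7 a8 a8
    all_goals first
      | omega
      | (exact absurd hij (hu _ (by omega)))
      | (exact absurd hij.symm (hu _ (by omega)))
      | (exact absurd hij (hv _ (by omega)))
      | (exact absurd hij.symm (hv _ (by omega)))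
      | (exact absurd hij huv)
      | (exact absurd hij.symm huv)
      | (have := hp.1 _ _ (by omega : i < l) (by omega : j < l) hij; omega)
      | (have := hp.1 _ _ (by omega : i - 2 < l) (by omega : j < l) hij; omega)
      | (have := hp.1 _ _ (by omega : i < l) (by omega : j - 2 < l) hij; omega)
      | (have := hp.1 _ _ (by omega : i - 2 < l) (by omega : j - 2 < l) hij; omega)
  · intro i hi
    simp only
    rcases Nat.lt_or_ge i 4 with hc | hc
    · interval_cases i
      · simpa using hp.2 0 (by omega)
      · simpa using h1.symm
      · simpa using h3
      · simpa using h2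
    · simp only [if_neg (by omega : ¬ i < 2), if_neg (by omega : ¬ i = 2),
        if_neg (by omega : ¬ i = 3), if_neg (by omega : ¬ i + 1 < 2),
        if_neg (by omega : ¬ i + 1 = 2), if_neg (by omega : ¬ i + 1 = 3)]
      have := hp.2 (i-2) (by omega)
      have e : i - 2 + 1 = i + 1 - 2 := by omega
      rw [e] at this
      exact this

/-- path `v p2 p1 u p3 p4 … p(l-1)`, length `l+1` -/
theorem pe_PB (hp : IsPE F l p) (hu : ∀ i, i < l → p i ≠ u) (hv : ∀ i, i < l → p i ≠ v)
    (huv : u ≠ v) (hl : 5 ≤ l)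
    (h1 : F.Adj u (p 1)) (h2 : F.Adj v (p 2)) (h3 : F.Adj u (p 3)) :
    IsPE F (l+1) (fun j => if j = 0 then v else if j = 1 then p 2 else if j = 2 then p 1
      else if j = 3 then u else p (j-1)) := by
  constructor
  · intro i j hi hj hij
    simp only at hij
    split_ifs at hij with a1 a2 a2 a3 a3 a4 a4 a5 a5 a6 a6 a7 a7 a8 a8 a9 a9 b1 b2 b3 b4 b5 b6
    all_goals first
      | omega
      | (exact absurd hij (hu _ (by omega)))
      | (exact absurd hij.symm (hu _ (by omega)))
      | (exact absurd hij (hv _ (by omega)))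
      | (exact absurd hij.symm (hv _ (by omega)))
      | (exact absurd hij huv)
      | (exact absurd hij.symm huv)
      | (have := hp.1 _ _ (by omega : (2:ℕ) < l) (by omega : (1:ℕ) < l) hij; omega)
      | (have := hp.1 _ _ (by omega : (1:ℕ) < l) (by omega : (2:ℕ) < l) hij; omega)
      | (have := hp.1 _ _ (by omega : (2:ℕ) < l) (by omega : j - 1 < l) hij; omega)
      | (have := hp.1 _ _ (by omega : (1:ℕ) < l) (by omega : j - 1 < l) hij; omega)
      | (have := hp.1 _ _ (by omega : i - 1 < l) (by omega : (2:ℕ) < l) hij; omega)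
      | (have := hp.1 _ _ (by omega : i - 1 < l) (by omega : (1:ℕ) < l) hij; omega)
      | (have := hp.1 _ _ (by omega : i - 1 < l) (by omega : j - 1 < l) hij; omega)
  · intro i hi
    simp only
    rcases Nat.lt_or_ge i 4 with hc | hc
    · interval_cases i
      · simpa using h2
      · simpa using (hp.2 1 (by omega)).symm
      · simpa using h1.symm
      · simpa using h3
    · simp only [if_neg (by omega : ¬ i = 0), if_neg (by omega : ¬ i = 1),
        if_neg (by omega : ¬ i = 2), if_neg (by omega : ¬ i = 3),
        if_neg (by omega : ¬ i + 1 = 0), if_neg (by omega : ¬ i + 1 = 1),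
        if_neg (by omega : ¬ i + 1 = 2), if_neg (by omega : ¬ i + 1 = 3)]
      have := hp.2 (i-1) (by omega)
      have e : i - 1 + 1 = i := by omega
      rw [e] at this
      have e2 : i + 1 - 1 = i := by omega
      rw [e2]
      exact this

/-- explicit 5-vertex path -/
theorem pe5 {a b c d e : V} (hab : F.Adj a b) (hbc : F.Adj b c) (hcd : F.Adj c d)
    (hde : F.Adj d e) (hac : a ≠ c) (had : a ≠ d) (hae : a ≠ e) (hbd : b ≠ d)
    (hbe : b ≠ e) (hce : c ≠ e) :
    IsPE F 5 (fun j => if j = 0 then a else if j = 1 then b else if j = 2 then c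
      else if j = 3 then d else e) := by
  constructor
  · intro i j hi hj hij
    interval_cases i <;> interval_cases j <;>
      simp_all [hab.ne, hbc.ne, hcd.ne, hde.ne] <;> omega
  · intro i hi
    have hi4 : i < 4 := by omega
    interval_cases i
    · simpa using hab
    · simpa using hbc
    · simpa using hcd
    · simpa using hde

end constructions

theorem exists3 {α : Type*} [DecidableEq α] {s : Finset α} (h : 3 ≤ s.card) :
    ∃ a ∈ s, ∃ b ∈ s, ∃ c ∈ s, a ≠ b ∧ a ≠ c ∧ b ≠ c := by
  obtain ⟨t, hts, htc⟩ := Finset.exists_subset_card_eq h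
  obtain ⟨a, b, c, hab, hac, hbc, rfl⟩ := Finset.card_eq_three.mp htc
  exact ⟨a, hts (by simp), b, hts (by simp), c, hts (by simp), hab, hac, hbc⟩

theorem exists2 {α : Type*} {s : Finset α} (h : 2 ≤ s.card) :
    ∃ a ∈ s, ∃ b ∈ s, a ≠ b := by
  have h' : 1 < s.card := by omega
  obtain ⟨a, ha, b, hb, hab⟩ := Finset.one_lt_card.mp h'
  exact ⟨a, ha, b, hb, hab⟩

theorem lemmaA {V : Type*} [Fintype V] [DecidableEq V] (F : SimpleGraph V)
    (hm : 6 ≤ Fintype.card V)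
    (nb : ∀ u v a b c : V, u ≠ v → a ≠ b → a ≠ c → b ≠ c →
      a ≠ u → a ≠ v → b ≠ u → b ≠ v → c ≠ u → c ≠ v →
      ¬F.Adj u a → ¬F.Adj u b → ¬F.Adj u c → ¬F.Adj v a → ¬F.Adj v b → ¬F.Adj v c → False) :
    ∃ p : ℕ → V, IsPE F (Fintype.card V - 1) p := by
  classical
  set m := Fintype.card V with hmdef
  set Pr : ℕ → Prop := fun l => ∃ p, IsPE F l p with hPr
  have hinh : Nonempty V := Fintype.card_pos_iff.mp (by omega)
  obtain ⟨d⟩ := hinh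
  have h0 : Pr 0 := ⟨fun _ => d, fun i j hi _ _ => by omega, fun i hi => by omega⟩
  set L := Nat.findGreatest Pr m with hLdef
  have hPL : Pr L := Nat.findGreatest_spec (Nat.zero_le m) h0
  have hmax : ∀ l' q, IsPE F l' q → l' ≤ L := fun l' q h =>
    Nat.le_findGreatest (by rw [hmdef]; exact IsPE.le_card h) ⟨q, h⟩
  obtain ⟨p, hp⟩ := hPL
  -- L ≥ 2
  have hL2 : 2 ≤ L := by
    by_cases hE : ∃ a b : V, F.Adj a b
    · obtain ⟨a, b, hab⟩ := hE
      refine hmax 2 (fun j => if j = 0 then a else b) ⟨?_, ?_⟩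
      · intro i j hi hj hij
        simp only at hij
        split_ifs at hij with h1 h2 h2
        · omega
        · exact absurd hij hab.ne
        · exact absurd hij.symm hab.ne
        · omega
      · intro i hi
        have : i = 0 := by omega
        subst this
        simpa using hab
    · push_neg at hE
      exfalso
      set e := (Fintype.equivFin V).symm with he
      have einj : Function.Injective e := (Fintype.equivFin V).symm.injective
      have hne : ∀ i j : Fin m, i ≠ j → e i ≠ e j := fun i j hij h => hij (einj h)
      exact nb (e ⟨0, by omega⟩) (e ⟨1, by omega⟩) (e ⟨2, by omega⟩) (e ⟨3, by omega⟩)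
        (e ⟨4, by omega⟩)
        (hne _ _ (by simp)) (hne _ _ (by simp)) (hne _ _ (by simp)) (hne _ _ (by simp))
        (hne _ _ (by simp)) (hne _ _ (by simp)) (hne _ _ (by simp)) (hne _ _ (by simp))
        (hne _ _ (by simp)) (hne _ _ (by simp))
        (hE _ _) (hE _ _) (hE _ _) (hE _ _) (hE _ _) (hE _ _)
  -- ends are nonadjacent to outside vertices
  have hend : ∀ (q : ℕ → V), IsPE F L q → ∀ u, (∀ i, i < L → q i ≠ u) →
      ¬F.Adj u (q 0) ∧ ¬F.Adj u (q (L-1)) := by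
    have key : ∀ (q : ℕ → V), IsPE F L q → ∀ u, (∀ i, i < L → q i ≠ u) →
        ¬F.Adj u (q 0) := by
      intro q hq u hu hadj
      have := hmax _ _ (pe_prepend hq hu hadj (by omega))
      omega
    intro q hq u hu
    refine ⟨key q hq u hu, ?_⟩
    have hrev := key (fun i => q (L - 1 - i)) hq.reverse u
      (fun i hi => hu (L - 1 - i) (by omega))
    simpa using hrev
  -- distinctness on the path
  have hd : ∀ a b : ℕ, a < L → b < L → a ≠ b → p a ≠ p b := by
    intro a b ha hb hab hpp
    exact hab (hp.1 a b ha hb hpp)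
  -- few vertices outside
  set S : Finset V := Finset.univ \ (Finset.range L).image p with hSdef
  have hSmem : ∀ x ∈ S, ∀ i, i < L → p i ≠ x := by
    intro x hx i hi hpx
    rw [hSdef] at hx
    simp only [Finset.mem_sdiff, Finset.mem_univ, true_and, Finset.mem_image] at hx
    exact hx ⟨i, Finset.mem_range.mpr hi, hpx⟩
  have hScard : m - L ≤ S.card := by
    rw [hSdef]
    have h1 : ((Finset.range L).image p).card ≤ L := by
      calc ((Finset.range L).image p).card ≤ (Finset.range L).card := Finset.card_image_le
        _ = L := Finset.card_range L
    have h2 : (Finset.univ \ (Finset.range L).image p).card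
        = m - ((Finset.range L).image p).card := by
      rw [Finset.card_sdiff_of_subset (Finset.subset_univ _)]
      simp [hmdef]
    omega
  have hLm : L ≤ m := by rw [hmdef]; exact hp.le_card
  -- L ≥ m - 2
  have hLm2 : m - 2 ≤ L := by
    by_contra hc
    have h3 : 3 ≤ S.card := by omega
    obtain ⟨u, huS, v, hvS, w, hwS, huv, huw, hvw⟩ := exists3 h3
    have hu := hSmem u huS
    have hv := hSmem v hvS
    have hw := hSmem w hwS
    have heu := hend p hp u hu
    have hev := hend p hp v hv
    have hew := hend p hp w hw
    exact nb (p 0) (p (L-1)) u v w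
      (hd 0 (L-1) (by omega) (by omega) (by omega)) huv huw hvw
      (hu 0 (by omega)).symm (hu (L-1) (by omega)).symm
      (hv 0 (by omega)).symm (hv (L-1) (by omega)).symm
      (hw 0 (by omega)).symm (hw (L-1) (by omega)).symm
      (fun h => heu.1 h.symm) (fun h => hev.1 h.symm) (fun h => hew.1 h.symm)
      (fun h => heu.2 h.symm) (fun h => hev.2 h.symm) (fun h => hew.2 h.symm)
  rcases Nat.lt_or_ge L (m-1) with hcase | hcase
  swap
  · exact ⟨p, hp.mono (by omega)⟩
  -- the hard case : L = m - 2
  exfalso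
  have hL4 : 4 ≤ L := by omega
  have h2 : 2 ≤ S.card := by omega
  obtain ⟨u0, huS, v0, hvS, huvne0⟩ := exists2 h2
  have interior : ∀ j, 0 < j → j < L - 1 → F.Adj u0 (p j) ∨ F.Adj v0 (p j) := by
    intro j hj1 hj2
    by_contra hc
    push_neg at hc
    have hu := hSmem u0 huS
    have hv := hSmem v0 hvS
    have heu := hend p hp u0 hu
    have hev := hend p hp v0 hv
    exact nb u0 v0 (p 0) (p j) (p (L-1)) huvne0
      (hd 0 j (by omega) (by omega) (by omega)) (hd 0 (L-1) (by omega) (by omega) (by omega))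
      (hd j (L-1) (by omega) (by omega) (by omega))
      (hu 0 (by omega)) (hv 0 (by omega)) (hu j (by omega)) (hv j (by omega))
      (hu (L-1) (by omega)) (hv (L-1) (by omega))
      heu.1 hc.1 heu.2 hev.1 hc.2 hev.2
  -- main claim, symmetric in u,v
  have claim : ∀ u v, u ∈ S → v ∈ S → u ≠ v →
      (∀ j, 0 < j → j < L - 1 → F.Adj u (p j) ∨ F.Adj v (p j)) →
      F.Adj u (p 1) → False := by
    intro u v huS hvS huvne hint h1
    have hu := hSmem u huS
    have hv := hSmem v hvS
    have heu := hend p hp u hu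
    have hev := hend p hp v hv
    have hins : ∀ w, (∀ i, i < L → p i ≠ w) → ∀ i0, i0 + 1 < L →
        F.Adj w (p i0) → F.Adj w (p (i0+1)) → False := by
      intro w hw i0 hi0 ha hb
      have := hmax _ _ (pe_insert hp hw hi0 ha hb)
      omega
    have h2u : ¬F.Adj u (p 2) := fun h => hins u hu 1 (by omega) h1 h
    have h2v : F.Adj v (p 2) := (hint 2 (by omega) (by omega)).resolve_left h2u
    have huv : ¬F.Adj u v := by
      intro h
      have := hmax _ _ (pe_PA hp hu hv huvne hL4 h1 h2v h)
      omega
    rcases Nat.lt_or_ge L 5 with hL5 | hL5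
    · -- L = 4
      have e : L - 1 = 3 := by omega
      rw [e] at heu hev
      have h3u : ¬F.Adj u (p 3) := heu.2
      have h02 : ¬F.Adj (p 0) (p 2) := by
        intro hadj
        have := hmax _ _ (pe5 h1 (hp.2 0 (by omega)).symm hadj (hp.2 2 (by omega))
          (hu 0 (by omega)).symm (hu 2 (by omega)).symm (hu 3 (by omega)).symm
          (hd 1 2 (by omega) (by omega) (by omega)) (hd 1 3 (by omega) (by omega) (by omega))
          (hd 0 3 (by omega) (by omega) (by omega)))
        omega
      have h03 : ¬F.Adj (p 0) (p 3) := by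
        intro hadj
        have := hmax _ _ (pe5 h1 (hp.2 0 (by omega)).symm hadj (hp.2 2 (by omega)).symm
          (hu 0 (by omega)).symm (hu 3 (by omega)).symm (hu 2 (by omega)).symm
          (hd 1 3 (by omega) (by omega) (by omega)) (hd 1 2 (by omega) (by omega) (by omega))
          (hd 0 2 (by omega) (by omega) (by omega)))
        omega
      exact nb u (p 0) (p 2) (p 3) v
        (hu 0 (by omega)).symm
        (hd 2 3 (by omega) (by omega) (by omega)) (hv 2 (by omega)) (hv 3 (by omega))
        (hu 2 (by omega)) (hd 2 0 (by omega) (by omega) (by omega))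
        (hu 3 (by omega)) (hd 3 0 (by omega) (by omega) (by omega))
        huvne.symm (hv 0 (by omega)).symm
        h2u h3u huv h02 h03 (fun hadj => hev.1 hadj.symm)
    · -- L ≥ 5
      have h3v : ¬F.Adj v (p 3) := fun hadj => hins v hv 2 (by omega) h2v hadj
      have h3u : F.Adj u (p 3) := (hint 3 (by omega) (by omega)).resolve_right h3v
      have := hmax _ _ (pe_PB hp hu hv huvne hL5 h1 h2v h3u)
      omega
  rcases interior 1 (by omega) (by omega) with h | h
  · exact claim u0 v0 huS hvS huvne0 interior h
  · exact claim v0 u0 hvS huS huvne0.symm (fun j a b => (interior j a b).symm) h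

theorem jedges : ∀ x y : Fin 5, (jahangir 2).Adj x y →
    (x = 0 ∧ y = 1) ∨ (x = 1 ∧ y = 0) ∨ (x = 1 ∧ y = 2) ∨ (x = 2 ∧ y = 1) ∨
    (x = 2 ∧ y = 3) ∨ (x = 3 ∧ y = 2) ∨ (x = 3 ∧ y = 0) ∨ (x = 0 ∧ y = 3) ∨
    (x = 4 ∧ y = 0) ∨ (x = 0 ∧ y = 4) ∨ (x = 4 ∧ y = 2) ∨ (x = 2 ∧ y = 4) := by
  intro x y h
  rw [jahangir, SimpleGraph.fromRel_adj] at h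
  fin_cases x <;> fin_cases y <;> simp_all <;> decide

theorem jadj01 : (jahangir 2).Adj 0 1 := by
  rw [jahangir, SimpleGraph.fromRel_adj]; refine ⟨by decide, Or.inl ?_⟩; decide

theorem jadj12 : (jahangir 2).Adj 1 2 := by
  rw [jahangir, SimpleGraph.fromRel_adj]; refine ⟨by decide, Or.inl ?_⟩; decide

theorem jadj23 : (jahangir 2).Adj 2 3 := by
  rw [jahangir, SimpleGraph.fromRel_adj]; refine ⟨by decide, Or.inl ?_⟩; decide

theorem idx_inj {n a b c d : ℕ} (hb : b < n) (hd : d < n) (h : a*n+b = c*n+d) :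
    a = c ∧ b = d := by
  have h1 : (a*n+b) % n = b := by
    rw [mul_comm, Nat.mul_add_mod, Nat.mod_eq_of_lt hb]
  have h2 : (c*n+d) % n = d := by
    rw [mul_comm, Nat.mul_add_mod, Nat.mod_eq_of_lt hd]
  have hbd : b = d := by rw [← h1, h, h2]
  refine ⟨?_, hbd⟩
  have h3 : a * n = c * n := by omega
  exact Nat.eq_of_mul_eq_mul_right (by omega) h3

theorem idx_lt {n k a b : ℕ} (ha : a < k) (hb : b < n) : a * n + b < k * n := by
  calc a * n + b < a * n + n := by omega
    _ = (a + 1) * n := by ring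
    _ ≤ k * n := Nat.mul_le_mul_right n (by omega)

/-- For `n ≥ 4`, `k ≥ 1` with `(n,k) ≠ (4,1)`, the Ramsey number `R(kP_n, J_4)`
equals `kn + 1`. -/
theorem ramsey_kPath_J4 (n k : ℕ) (hn : 4 ≤ n) (hk : 1 ≤ k) (h : ¬ (n = 4 ∧ k = 1)) :
    IsLeast {N | ramseyProp (kCopies k (pathGraph n)) (jahangir 2) N} (k * n + 1) := by
  have hkn : 5 ≤ k * n := by
    rcases Nat.lt_or_ge k 2 with hk2 | hk2
    · have hk1 : k = 1 := by omega
      subst hk1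
      have hn5 : 5 ≤ n := by
        rcases Nat.lt_or_ge n 5 with h5 | h5
        · interval_cases n
          exact absurd ⟨rfl, rfl⟩ h
        · exact h5
      simpa using hn5
    · calc 5 ≤ 2 * 4 := by norm_num
        _ ≤ k * n := Nat.mul_le_mul hk2 hn
  constructor
  · -- membership : ramseyProp holds at k*n+1
    intro F
    rw [or_iff_not_imp_right]
    intro hJ
    -- no two vertices have three common non-neighbours in F
    have nb : ∀ u v a b c : Fin (k*n+1), u ≠ v → a ≠ b → a ≠ c → b ≠ c →
        a ≠ u → a ≠ v → b ≠ u → b ≠ v → c ≠ u → c ≠ v →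
        ¬F.Adj u a → ¬F.Adj u b → ¬F.Adj u c → ¬F.Adj v a → ¬F.Adj v b → ¬F.Adj v c →
        False := by
      intro u v a b c huv hab hac hbc hau hav hbu hbv hcu hcv nua nub nuc nva nvb nvc
      apply hJ
      refine ⟨![u, a, v, b, c], ?_, ?_⟩
      · intro x y hxy
        fin_cases x <;> fin_cases y <;> simp_all <;>
          first
            | rfl
            | (exfalso; revert hxy;
               simp [huv, hab, hac, hbc, hau, hav, hbu, hbv, hcu, hcv,
                 huv.symm, hab.symm, hac.symm, hbc.symm, hau.symm, hav.symm,
                 hbu.symm, hbv.symm, hcu.symm, hcv.symm])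
      · intro x y hadj
        rcases jedges x y hadj with ⟨rfl,rfl⟩|⟨rfl,rfl⟩|⟨rfl,rfl⟩|⟨rfl,rfl⟩|⟨rfl,rfl⟩|⟨rfl,rfl⟩|⟨rfl,rfl⟩|⟨rfl,rfl⟩|⟨rfl,rfl⟩|⟨rfl,rfl⟩|⟨rfl,rfl⟩|⟨rfl,rfl⟩ <;>
          simp only [Matrix.cons_val_zero, Matrix.cons_val_one, Matrix.head_cons,
            Matrix.cons_val_two, Matrix.tail_cons, Matrix.cons_val_three,
            Matrix.cons_val_four, SimpleGraph.compl_adj]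
        · exact ⟨hau.symm, nua⟩
        · exact ⟨hau, fun hh => nua hh.symm⟩
        · exact ⟨hav, fun hh => nva hh.symm⟩
        · exact ⟨hav.symm, nva⟩
        · exact ⟨hbv.symm, nvb⟩
        · exact ⟨hbv, fun hh => nvb hh.symm⟩
        · exact ⟨hbu, fun hh => nub hh.symm⟩
        · exact ⟨hbu.symm, nub⟩
        · exact ⟨hcu, fun hh => nuc hh.symm⟩
        · exact ⟨hcu.symm, nuc⟩
        · exact ⟨hcv, fun hh => nvc hh.symm⟩
        · exact ⟨hcv.symm, nvc⟩
    have hm6 : 6 ≤ Fintype.card (Fin (k*n+1)) := by simp; omega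
    obtain ⟨p, hp⟩ := lemmaA F hm6 nb
    rw [Fintype.card_fin] at hp
    have hp' : IsPE F (k*n) p := by simpa using hp
    refine ⟨fun x => p (x.1.val * n + x.2.val), ?_, ?_⟩
    · intro x y hxy
      have hx := idx_lt x.1.isLt x.2.isLt
      have hy := idx_lt y.1.isLt y.2.isLt
      have heq := hp'.1 _ _ hx hy hxy
      obtain ⟨h1, h2⟩ := idx_inj x.2.isLt y.2.isLt heq
      exact Prod.ext (Fin.ext h1) (Fin.ext h2)
    · intro x y hadj
      obtain ⟨h1, h2⟩ := hadj
      rw [SimpleGraph.pathGraph_adj] at h2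
      have hx1 : x.1.val = y.1.val := congrArg Fin.val h1
      show F.Adj (p (x.1.val * n + x.2.val)) (p (y.1.val * n + y.2.val))
      rcases h2 with h2 | h2
      · have e : y.1.val * n + y.2.val = (x.1.val * n + x.2.val) + 1 := by
          rw [hx1]; omega
        rw [e]
        exact hp'.2 _ (by rw [← e]; exact idx_lt y.1.isLt y.2.isLt)
      · have e : x.1.val * n + x.2.val = (y.1.val * n + y.2.val) + 1 := by
          rw [hx1]; omega
        rw [e]
        exact (hp'.2 _ (by rw [← e]; exact idx_lt x.1.isLt x.2.isLt)).symm
  · -- lower bound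
    intro N hN
    by_contra hlt
    push_neg at hlt
    have hNle : N ≤ k * n := by omega
    set F : SimpleGraph (Fin N) :=
      { Adj := fun a b => a ≠ b ∧ a.val + 1 < N ∧ b.val + 1 < N,
        symm := ⟨fun a b hab => ⟨hab.1.symm, hab.2.2, hab.2.1⟩⟩,
        loopless := ⟨fun a hab => hab.1 rfl⟩ } with hF
    rcases hN F with ⟨f, hfinj, hfadj⟩ | ⟨g, hginj, hgadj⟩
    · have hcard : k * n ≤ N := by
        simpa using Fintype.card_le_of_injective f hfinj
      have hNeq : N = k * n := by omega
      have hbij : Function.Bijective f :=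
        (Fintype.bijective_iff_injective_and_card f).mpr ⟨hfinj, by simp [hNeq]⟩
      obtain ⟨⟨i, j⟩, hij⟩ := hbij.2 ⟨N - 1, by omega⟩
      have hn2 : 2 ≤ n := by omega
      obtain ⟨j', hjj'⟩ : ∃ j' : Fin n, (pathGraph n).Adj j j' := by
        rcases Nat.lt_or_ge (j.val + 1) n with hc | hc
        · exact ⟨⟨j.val + 1, hc⟩, by rw [SimpleGraph.pathGraph_adj]; left; rfl⟩
        · have hj1 : 1 ≤ j.val := by omega
          refine ⟨⟨j.val - 1, by omega⟩, ?_⟩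
          rw [SimpleGraph.pathGraph_adj]
          right
          simp
          omega
      have hadj := hfadj (show (kCopies k (pathGraph n)).Adj (i,j) (i,j') from ⟨rfl, hjj'⟩)
      rw [hij] at hadj
      have := hadj.2.1
      simp only [Fin.val_mk] at this
      omega
    · have hlast : ∀ x y : Fin N, Fᶜ.Adj x y → x.val + 1 = N ∨ y.val + 1 = N := by
        intro x y hxy
        rw [SimpleGraph.compl_adj] at hxy
        obtain ⟨hne, hnadj⟩ := hxy
        by_contra hc
        push_neg at hc
        exact hnadj ⟨hne, by omega, by omega⟩
      have hlasteq : ∀ x y : Fin N, x.val + 1 = N → y.val + 1 = N → x = y := by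
        intro x y hx hy
        exact Fin.ext (by omega)
      have e01 := hlast _ _ (hgadj jadj01)
      have e12 := hlast _ _ (hgadj jadj12)
      have e23 := hlast _ _ (hgadj jadj23)
      have h1last : (g 1).val + 1 = N := by
        rcases e01 with h0 | h1
        · rcases e12 with h1 | h2
          · exact h1
          · exact absurd (hginj (hlasteq _ _ h0 h2)) (by decide)
        · exact h1
      rcases e23 with h2 | h3
      · exact absurd (hginj (hlasteq _ _ h2 h1last)) (by decide)
      · exact absurd (hginj (hlasteq _ _ h3 h1last)) (by decide)
end

section
/- For all integers n ≥ 5 and k ≥ 1, every simple graph F on kn + 1 vertices either contains k pairwise vertex-disjoint copies of the path P_n as subgraphs, or its complement contains the Jahangir graph J_4 as a subgraph. -/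
open SimpleGraph

set_option maxHeartbeats 1000000 in
lemma key_of_noJ4 {V : Type*} (G : SimpleGraph V) (hJ : ¬ Contains (jahangir 2) Gᶜ)
    (u v a b c : V)
    (huv : u ≠ v) (hab : a ≠ b) (hac : a ≠ c) (hbc : b ≠ c)
    (hau : a ≠ u) (hav : a ≠ v) (hbu : b ≠ u) (hbv : b ≠ v) (hcu : c ≠ u) (hcv : c ≠ v)
    (h1 : ¬ G.Adj u a) (h2 : ¬ G.Adj v a) (h3 : ¬ G.Adj u b) (h4 : ¬ G.Adj v b)
    (h5 : ¬ G.Adj u c) (h6 : ¬ G.Adj v c) : False := by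
  apply hJ
  refine ⟨![u, a, v, b, c], ?_, ?_⟩
  · intro x y hxy
    fin_cases x <;> fin_cases y <;> simp_all <;> tauto
  · intro x y hxy
    fin_cases x <;> fin_cases y <;>
      first
      | (exfalso; simp only [jahangir, SimpleGraph.fromRel_adj] at hxy; revert hxy; decide)
      | (refine ⟨?_, ?_⟩ <;> intro h <;>
          first
          | exact huv h | exact huv h.symm | exact hab h | exact hab h.symm
          | exact hac h | exact hac h.symm | exact hbc h | exact hbc h.symm
          | exact hau h | exact hau h.symm | exact hav h | exact hav h.symm
          | exact hbu h | exact hbu h.symm | exact hbv h | exact hbv h.symm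
          | exact hcu h | exact hcu h.symm | exact hcv h | exact hcv h.symm
          | exact h1 h | exact h1 h.symm | exact h2 h | exact h2 h.symm
          | exact h3 h | exact h3 h.symm | exact h4 h | exact h4 h.symm
          | exact h5 h | exact h5 h.symm | exact h6 h | exact h6 h.symm)

def PathOn {V : Type*} (G : SimpleGraph V) (l : ℕ) (f : ℕ → V) : Prop :=
  (∀ i j, i < l → j < l → f i = f j → i = j) ∧ ∀ i, i + 1 < l → G.Adj (f i) (f (i + 1))

def HasPath {V : Type*} (G : SimpleGraph V) (l : ℕ) : Prop := ∃ f, PathOn G l f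

variable {V : Type*} {G : SimpleGraph V}

lemma hasPath_mono {l m : ℕ} (h : HasPath G l) (hm : m ≤ l) : HasPath G m := by
  obtain ⟨f, hinj, hadj⟩ := h
  exact ⟨f, fun i j hi hj => hinj i j (by omega) (by omega), fun i hi => hadj i (by omega)⟩

lemma c_prepend {L : ℕ} {f : ℕ → V} {w : V} (hp : PathOn G L f)
    (hout : ∀ i, i < L → f i ≠ w) (hw : G.Adj w (f 0)) : HasPath G (L + 1) := by
  obtain ⟨hinj, hadj⟩ := hp
  have step : ∀ i j, i < L → j < L → j = i + 1 → G.Adj (f i) (f j) :=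
    fun i j hi hj hj' => hj' ▸ hadj i (hj' ▸ hj)
  have hinj' : ∀ {i j}, f i = f j → i < L → j < L → i = j :=
    fun h hi hj => hinj _ _ hi hj h
  refine ⟨fun i => if i = 0 then w else f (i - 1), ?_, ?_⟩
  · intro i j hi hj heq
    dsimp only at heq
    split_ifs at heq with h1 h2 h2 <;>
      first
      | omega
      | contradiction
      | tauto
      | (exact (hout _ (by omega) heq).elim)
      | (exact (hout _ (by omega) heq.symm).elim)
      | (have := hinj' heq (by omega) (by omega); omega)
  · intro i hi
    dsimp only
    split_ifs with h1 h2 h2 <;>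
      first
      | omega
      | contradiction
      | (convert hw using 2 <;> omega)
      | (convert hw.symm using 2 <;> omega)
      | (refine step _ _ ?_ ?_ ?_ <;> omega)
      | (refine (step _ _ ?_ ?_ ?_).symm <;> omega)

lemma c_append {L : ℕ} {f : ℕ → V} {w : V} (hp : PathOn G L f) (hL : 1 ≤ L)
    (hout : ∀ i, i < L → f i ≠ w) (hw : G.Adj (f (L - 1)) w) : HasPath G (L + 1) := by
  obtain ⟨hinj, hadj⟩ := hp
  have step : ∀ i j, i < L → j < L → j = i + 1 → G.Adj (f i) (f j) :=
    fun i j hi hj hj' => hj' ▸ hadj i (hj' ▸ hj)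
  have hinj' : ∀ {i j}, f i = f j → i < L → j < L → i = j :=
    fun h hi hj => hinj _ _ hi hj h
  refine ⟨fun i => if i = L then w else f i, ?_, ?_⟩
  · intro i j hi hj heq
    dsimp only at heq
    split_ifs at heq with h1 h2 h2 <;>
      first
      | omega
      | contradiction
      | tauto
      | (exact (hout _ (by omega) heq).elim)
      | (exact (hout _ (by omega) heq.symm).elim)
      | (have := hinj' heq (by omega) (by omega); omega)
  · intro i hi
    dsimp only
    split_ifs with h1 h2 h2 <;>
      first
      | omega
      | contradiction
      | (convert hw using 2 <;> omega)
      | (convert hw.symm using 2 <;> omega)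
      | (refine step _ _ ?_ ?_ ?_ <;> omega)
      | (refine (step _ _ ?_ ?_ ?_).symm <;> omega)

lemma c_insert {L k : ℕ} {f : ℕ → V} {w : V} (hp : PathOn G L f) (hk : k + 1 < L)
    (hout : ∀ i, i < L → f i ≠ w) (hw1 : G.Adj (f k) w) (hw2 : G.Adj w (f (k + 1))) :
    HasPath G (L + 1) := by
  obtain ⟨hinj, hadj⟩ := hp
  have step : ∀ i j, i < L → j < L → j = i + 1 → G.Adj (f i) (f j) :=
    fun i j hi hj hj' => hj' ▸ hadj i (hj' ▸ hj)
  have hinj' : ∀ {i j}, f i = f j → i < L → j < L → i = j :=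
    fun h hi hj => hinj _ _ hi hj h
  refine ⟨fun i => if i ≤ k then f i else if i = k + 1 then w else f (i - 1), ?_, ?_⟩
  · intro i j hi hj heq
    dsimp only at heq
    split_ifs at heq <;>
      first
      | omega
      | contradiction
      | tauto
      | (exact (hout _ (by omega) heq).elim)
      | (exact (hout _ (by omega) heq.symm).elim)
      | (have := hinj' heq (by omega) (by omega); omega)
  · intro i hi
    dsimp only
    split_ifs <;>
      first
      | omega
      | contradiction
      | tauto
      | (convert hw1 using 2 <;> omega)
      | (convert hw1.symm using 2 <;> omega)
      | (convert hw2 using 2 <;> omega)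
      | (convert hw2.symm using 2 <;> omega)
      | (refine step _ _ ?_ ?_ ?_ <;> omega)
      | (refine (step _ _ ?_ ?_ ?_).symm <;> omega)

lemma c_insert2 {L k : ℕ} {f : ℕ → V} {w w' : V} (hp : PathOn G L f) (hk : k + 1 < L)
    (hout : ∀ i, i < L → f i ≠ w) (hout' : ∀ i, i < L → f i ≠ w') (hww' : w ≠ w')
    (hw1 : G.Adj (f k) w) (hw2 : G.Adj w w') (hw3 : G.Adj w' (f (k + 1))) :
    HasPath G (L + 2) := by
  obtain ⟨hinj, hadj⟩ := hp
  have step : ∀ i j, i < L → j < L → j = i + 1 → G.Adj (f i) (f j) :=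
    fun i j hi hj hj' => hj' ▸ hadj i (hj' ▸ hj)
  have hinj' : ∀ {i j}, f i = f j → i < L → j < L → i = j :=
    fun h hi hj => hinj _ _ hi hj h
  refine ⟨fun i => if i ≤ k then f i else if i = k + 1 then w else if i = k + 2 then w'
    else f (i - 2), ?_, ?_⟩
  · intro i j hi hj heq
    dsimp only at heq
    split_ifs at heq <;>
      first
      | omega
      | contradiction
      | tauto
      | (exact (hout _ (by omega) heq).elim)
      | (exact (hout _ (by omega) heq.symm).elim)
      | (exact (hout' _ (by omega) heq).elim)
      | (exact (hout' _ (by omega) heq.symm).elim)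
      | (exact absurd heq hww')
      | (exact absurd heq.symm hww')
      | (have := hinj' heq (by omega) (by omega); omega)
  · intro i hi
    dsimp only
    split_ifs <;>
      first
      | omega
      | contradiction
      | tauto
      | (convert hw1 using 2 <;> omega)
      | (convert hw1.symm using 2 <;> omega)
      | (convert hw2 using 2 <;> omega)
      | (convert hw2.symm using 2 <;> omega)
      | (convert hw3 using 2 <;> omega)
      | (convert hw3.symm using 2 <;> omega)
      | (refine step _ _ ?_ ?_ ?_ <;> omega)
      | (refine (step _ _ ?_ ?_ ?_).symm <;> omega)

lemma c_rot1 {L : ℕ} {f : ℕ → V} {w : V} (hp : PathOn G L f) (hL : 4 ≤ L)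
    (hout : ∀ i, i < L → f i ≠ w) (hw : G.Adj w (f 1)) (hcyc : G.Adj (f 0) (f (L - 1))) :
    HasPath G (L + 1) := by
  obtain ⟨hinj, hadj⟩ := hp
  have step : ∀ i j, i < L → j < L → j = i + 1 → G.Adj (f i) (f j) :=
    fun i j hi hj hj' => hj' ▸ hadj i (hj' ▸ hj)
  have hinj' : ∀ {i j}, f i = f j → i < L → j < L → i = j :=
    fun h hi hj => hinj _ _ hi hj h
  refine ⟨fun i => if i = 0 then w else if i = 1 then f 1 else if i = 2 then f 0
    else f (L + 2 - i), ?_, ?_⟩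
  · intro i j hi hj heq
    dsimp only at heq
    split_ifs at heq <;>
      first
      | omega
      | contradiction
      | tauto
      | (exact (hout _ (by omega) heq).elim)
      | (exact (hout _ (by omega) heq.symm).elim)
      | (have := hinj' heq (by omega) (by omega); omega)
  · intro i hi
    dsimp only
    split_ifs <;>
      first
      | omega
      | contradiction
      | tauto
      | (convert hw using 2 <;> omega)
      | (convert hw.symm using 2 <;> omega)
      | (convert hcyc using 2 <;> omega)
      | (convert hcyc.symm using 2 <;> omega)
      | (refine step _ _ ?_ ?_ ?_ <;> omega)
      | (refine (step _ _ ?_ ?_ ?_).symm <;> omega)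

lemma c_rot2 {L : ℕ} {f : ℕ → V} {w : V} (hp : PathOn G L f) (hL : 3 ≤ L)
    (hout : ∀ i, i < L → f i ≠ w) (hw : G.Adj w (f 1)) (h02 : G.Adj (f 0) (f 2)) :
    HasPath G (L + 1) := by
  obtain ⟨hinj, hadj⟩ := hp
  have step : ∀ i j, i < L → j < L → j = i + 1 → G.Adj (f i) (f j) :=
    fun i j hi hj hj' => hj' ▸ hadj i (hj' ▸ hj)
  have hinj' : ∀ {i j}, f i = f j → i < L → j < L → i = j :=
    fun h hi hj => hinj _ _ hi hj h
  refine ⟨fun i => if i = 0 then w else if i = 1 then f 1 else if i = 2 then f 0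
    else f (i - 1), ?_, ?_⟩
  · intro i j hi hj heq
    dsimp only at heq
    split_ifs at heq <;>
      first
      | omega
      | contradiction
      | tauto
      | (exact (hout _ (by omega) heq).elim)
      | (exact (hout _ (by omega) heq.symm).elim)
      | (have := hinj' heq (by omega) (by omega); omega)
  · intro i hi
    dsimp only
    split_ifs <;>
      first
      | omega
      | contradiction
      | tauto
      | (convert hw using 2 <;> omega)
      | (convert hw.symm using 2 <;> omega)
      | (convert h02 using 2 <;> omega)
      | (convert h02.symm using 2 <;> omega)
      | (refine step _ _ ?_ ?_ ?_ <;> omega)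
      | (refine (step _ _ ?_ ?_ ?_).symm <;> omega)

lemma hasPath_two {x y : V} (h : G.Adj x y) : HasPath G 2 := by
  refine ⟨fun i => if i = 0 then x else y, ?_, ?_⟩
  · intro i j hi hj heq
    dsimp only at heq
    split_ifs at heq <;>
      first | omega | contradiction | tauto | (exact absurd heq h.ne) | (exact absurd heq.symm h.ne)
  · intro i hi
    dsimp only
    split_ifs <;> first | omega | contradiction | tauto | (convert h using 2 <;> omega) | exact h

lemma hasPath_contains {n : ℕ} (h : HasPath G n) : Contains (pathGraph n) G := by
  obtain ⟨f, hinj, hadj⟩ := h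
  refine ⟨fun i => f i.val, ?_, ?_⟩
  · intro i j hij
    exact Fin.ext (hinj _ _ i.isLt j.isLt hij)
  · intro a b hab
    rw [pathGraph_adj] at hab
    rcases hab with h1 | h1
    · have h2 := hadj a.val (by omega)
      rw [h1] at h2
      exact h2
    · have h2 := hadj b.val (by omega)
      rw [h1] at h2
      exact h2.symm

lemma core (n : ℕ) (hn : 5 ≤ n) (G : SimpleGraph (Fin (n + 1)))
    (hJ : ¬ Contains (jahangir 2) Gᶜ) : Contains (pathGraph n) G := by
  classical
  -- bound on path lengths
  have hbound : ∀ l, HasPath G l → l ≤ n + 1 := by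
    rintro l ⟨f, hinj, -⟩
    have hcard : ((Finset.range l).image f).card = l := by
      rw [Finset.card_image_of_injOn, Finset.card_range]
      intro i hi j hj h
      exact hinj i j (Finset.mem_range.mp hi) (Finset.mem_range.mp hj) h
    calc l = ((Finset.range l).image f).card := hcard.symm
      _ ≤ Fintype.card (Fin (n + 1)) :=
        (Finset.card_le_univ _).trans (le_of_eq Finset.card_univ)
      _ = n + 1 := by simp
  have hP1 : HasPath G 1 :=
    ⟨fun _ => ⟨0, by omega⟩, fun i j hi hj _ => by omega, fun i hi => by omega⟩
  set L := Nat.findGreatest (HasPath G) (n + 1) with hLdef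
  have hPL : HasPath G L := Nat.findGreatest_spec (by omega : 1 ≤ n + 1) hP1
  have hmax : ∀ m, HasPath G m → m ≤ L := fun m hm => Nat.le_findGreatest (hbound m hm) hm
  have hL1 : 1 ≤ L := hmax 1 hP1
  -- enough to find a path on n vertices
  suffices hsuff : HasPath G n by exact hasPath_contains hsuff
  -- there is an edge (else contradiction)
  have mkne : ∀ {a b : ℕ} {ha : a < n + 1} {hb : b < n + 1}, a ≠ b →
      (⟨a, ha⟩ : Fin (n + 1)) ≠ ⟨b, hb⟩ :=
    fun h heq => h (congrArg Fin.val heq)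
  by_cases hedge : ∀ x y : Fin (n + 1), ¬G.Adj x y
  · exfalso
    exact key_of_noJ4 G hJ ⟨0, by omega⟩ ⟨1, by omega⟩ ⟨2, by omega⟩ ⟨3, by omega⟩ ⟨4, by omega⟩
      (mkne (by omega)) (mkne (by omega)) (mkne (by omega)) (mkne (by omega))
      (mkne (by omega)) (mkne (by omega)) (mkne (by omega)) (mkne (by omega))
      (mkne (by omega)) (mkne (by omega))
      (hedge _ _) (hedge _ _) (hedge _ _) (hedge _ _) (hedge _ _) (hedge _ _)
  · push_neg at hedge
    obtain ⟨x, y, hxy⟩ := hedge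
    have hL2 : 2 ≤ L := hmax 2 (hasPath_two hxy)
    by_cases hLn : n ≤ L
    · exact hasPath_mono hPL hLn
    push_neg at hLn
    obtain ⟨f, hp⟩ := hPL
    obtain ⟨hinj, hadj⟩ := id hp
    -- endpoints are not adjacent to outside vertices
    have hout_head : ∀ w : Fin (n + 1), (∀ i, i < L → f i ≠ w) → ¬G.Adj w (f 0) := by
      intro w hw hadjw
      have := hmax (L + 1) (c_prepend hp hw hadjw)
      omega
    have hout_last : ∀ w : Fin (n + 1), (∀ i, i < L → f i ≠ w) → ¬G.Adj (f (L - 1)) w := by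
      intro w hw hadjw
      have := hmax (L + 1) (c_append hp (by omega) hw hadjw)
      omega
    -- the set of outside vertices
    set S : Finset (Fin (n + 1)) := Finset.univ \ (Finset.range L).image f with hSdef
    have hmemS : ∀ w : Fin (n + 1), w ∈ S ↔ ∀ i, i < L → f i ≠ w := by
      intro w
      simp only [hSdef, Finset.mem_sdiff, Finset.mem_univ, true_and, Finset.mem_image,
        Finset.mem_range, not_exists, not_and]
    have hScard : S.card = n + 1 - L := by
      rw [hSdef, Finset.card_sdiff_of_subset (Finset.subset_univ _)]
      have : ((Finset.range L).image f).card = L := by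
        rw [Finset.card_image_of_injOn, Finset.card_range]
        intro i hi j hj h
        exact hinj i j (Finset.mem_range.mp hi) (Finset.mem_range.mp hj) h
      simp [this]
    have hne : ∀ {i j : ℕ}, i < L → j < L → i ≠ j → f i ≠ f j :=
      fun hi hj hij h => hij (hinj _ _ hi hj h)
    -- L = n - 1
    have hLn1 : L = n - 1 := by
      by_contra hc
      have h3 : 3 ≤ S.card := by omega
      obtain ⟨a, ha⟩ := Finset.card_pos.mp (by omega : 0 < S.card)
      obtain ⟨b, hb⟩ := Finset.card_pos.mp (show 0 < (S.erase a).card by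
        rw [Finset.card_erase_of_mem ha]; omega)
      obtain ⟨c, hc2⟩ := Finset.card_pos.mp (show 0 < ((S.erase a).erase b).card by
        rw [Finset.card_erase_of_mem hb, Finset.card_erase_of_mem ha]; omega)
      obtain ⟨hba, hbS⟩ := Finset.mem_erase.mp hb
      obtain ⟨hcb, hc3⟩ := Finset.mem_erase.mp hc2
      obtain ⟨hca, hcS⟩ := Finset.mem_erase.mp hc3
      have hA := (hmemS a).mp ha
      have hB := (hmemS b).mp hbS
      have hC := (hmemS c).mp hcS
      exact key_of_noJ4 G hJ (f 0) (f (L - 1)) a b c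
        (hne (by omega) (by omega) (by omega)) hba.symm hca.symm hcb.symm
        (hA 0 (by omega)).symm (hA (L-1) (by omega)).symm
        (hB 0 (by omega)).symm (hB (L-1) (by omega)).symm
        (hC 0 (by omega)).symm (hC (L-1) (by omega)).symm
        (fun h => hout_head a hA h.symm) (hout_last a hA)
        (fun h => hout_head b hB h.symm) (hout_last b hB)
        (fun h => hout_head c hC h.symm) (hout_last c hC)
    have hL4 : 4 ≤ L := by omega
    have hnL : n = L + 1 := by omega
    -- exactly two outside vertices u, v
    obtain ⟨u, v, huvne, hS⟩ := Finset.card_eq_two.mp (by omega : S.card = 2)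
    have hU : ∀ i, i < L → f i ≠ u := (hmemS u).mp (by rw [hS]; simp)
    have hV : ∀ i, i < L → f i ≠ v := (hmemS v).mp (by rw [hS]; simp)
    -- basic nonadjacencies
    have nu0 : ¬G.Adj u (f 0) := hout_head u hU
    have nv0 : ¬G.Adj v (f 0) := hout_head v hV
    have nul : ¬G.Adj (f (L - 1)) u := hout_last u hU
    have nvl : ¬G.Adj (f (L - 1)) v := hout_last v hV
    -- u and v dominate the interior
    have pairUV : ∀ k, 1 ≤ k → k ≤ L - 2 → ¬G.Adj u (f k) → ¬G.Adj v (f k) → False := by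
      intro k hk1 hk2 hk3 hk4
      exact key_of_noJ4 G hJ u v (f 0) (f (L - 1)) (f k)
        huvne (hne (by omega) (by omega) (by omega)) (hne (by omega) (by omega) (by omega))
        (hne (by omega) (by omega) (by omega))
        (hU 0 (by omega)) (hV 0 (by omega)) (hU (L-1) (by omega)) (hV (L-1) (by omega))
        (hU k (by omega)) (hV k (by omega))
        nu0 nv0 (fun h => nul h.symm) (fun h => nvl h.symm) hk3 hk4
    suffices hfin : HasPath G (L + 1) by rwa [← hnL] at hfin
    by_cases huv : G.Adj u v
    · -- u ~ v : insert one or two vertices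
      by_cases hu1 : G.Adj u (f 1)
      · by_cases hu2 : G.Adj u (f 2)
        · exact c_insert (k := 1) hp (by omega) hU hu1.symm hu2
        · have hv2 : G.Adj v (f 2) := by
            by_contra h
            exact pairUV 2 (by omega) (by omega) hu2 h
          exact hasPath_mono (c_insert2 (k := 1) hp (by omega) hU hV huvne
            hu1.symm huv hv2) (by omega)
      · have hv1 : G.Adj v (f 1) := by
          by_contra h
          exact pairUV 1 (by omega) (by omega) hu1 h
        by_cases hv2 : G.Adj v (f 2)
        · exact c_insert (k := 1) hp (by omega) hV hv1.symm hv2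
        · have hu2 : G.Adj u (f 2) := by
            by_contra h
            exact pairUV 2 (by omega) (by omega) h hv2
          exact hasPath_mono (c_insert2 (k := 1) hp (by omega) hV hU huvne.symm
            hv1.symm huv.symm hu2) (by omega)
    · by_cases hcyc : G.Adj (f 0) (f (L - 1))
      · -- rotation
        by_cases hu1 : G.Adj u (f 1)
        · exact c_rot1 hp (by omega) hU hu1 hcyc
        · have hv1 : G.Adj v (f 1) := by
            by_contra h
            exact pairUV 1 (by omega) (by omega) hu1 h
          exact c_rot1 hp (by omega) hV hv1 hcyc
      · -- final case
        by_cases hu12 : G.Adj u (f 1) ∧ G.Adj u (f 2)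
        · exact c_insert (k := 1) hp (by omega) hU hu12.1.symm hu12.2
        by_cases hv12 : G.Adj v (f 1) ∧ G.Adj v (f 2)
        · exact c_insert (k := 1) hp (by omega) hV hv12.1.symm hv12.2
        have hpu : ∀ k, 1 ≤ k → k ≤ L - 2 → ¬G.Adj u (f k) → ¬G.Adj (f 0) (f k) → False := by
          intro k hk1 hk2 hk3 hk4
          exact key_of_noJ4 G hJ u (f 0) v (f (L - 1)) (f k)
            (fun h => hU 0 (by omega) h.symm)
            (hV (L-1) (by omega)).symm (hV k (by omega)).symm
            (hne (by omega) (by omega) (by omega))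
            huvne.symm (hV 0 (by omega)).symm
            (hU (L-1) (by omega)) (hne (by omega) (by omega) (by omega))
            (hU k (by omega)) (hne (by omega) (by omega) (by omega))
            huv (fun h => nv0 h.symm) (fun h => nul h.symm) hcyc hk3 hk4
        have hpv : ∀ k, 1 ≤ k → k ≤ L - 2 → ¬G.Adj v (f k) → ¬G.Adj (f 0) (f k) → False := by
          intro k hk1 hk2 hk3 hk4
          exact key_of_noJ4 G hJ v (f 0) u (f (L - 1)) (f k)
            (fun h => hV 0 (by omega) h.symm)
            (hU (L-1) (by omega)).symm (hU k (by omega)).symm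
            (hne (by omega) (by omega) (by omega))
            huvne (hU 0 (by omega)).symm
            (hV (L-1) (by omega)) (hne (by omega) (by omega) (by omega))
            (hV k (by omega)) (hne (by omega) (by omega) (by omega))
            (fun h => huv h.symm) (fun h => nu0 h.symm) (fun h => nvl h.symm) hcyc hk3 hk4
        have h02 : G.Adj (f 0) (f 2) := by
          by_contra h02
          have hu2 : G.Adj u (f 2) := by
            by_contra h
            exact hpu 2 (by omega) (by omega) h h02
          have hv2 : G.Adj v (f 2) := by
            by_contra h
            exact hpv 2 (by omega) (by omega) h h02
          by_cases hu1 : G.Adj u (f 1)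
          · exact hu12 ⟨hu1, hu2⟩
          · have hv1 : G.Adj v (f 1) := by
              by_contra h
              exact pairUV 1 (by omega) (by omega) hu1 h
            exact hv12 ⟨hv1, hv2⟩
        by_cases hu1 : G.Adj u (f 1)
        · exact c_rot2 hp (by omega) hU hu1 h02
        · have hv1 : G.Adj v (f 1) := by
            by_contra h
            exact pairUV 1 (by omega) (by omega) hu1 h
          exact c_rot2 hp (by omega) hV hv1 h02

lemma transfer_compl {α β γ : Type*} {H : SimpleGraph α} {F : SimpleGraph β} {g : γ → β}
    (hg : Function.Injective g) (h : Contains H (F.comap g)ᶜ) : Contains H Fᶜ := by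
  obtain ⟨f, finj, fadj⟩ := h
  refine ⟨g ∘ f, hg.comp finj, fun a b hab => ?_⟩
  have h2 := fadj hab
  rw [compl_adj] at h2 ⊢
  exact ⟨fun hh => h2.1 (hg hh), by simpa using h2.2⟩


/-- For `n ≥ 5` and `k ≥ 1`, every graph on `kn + 1` vertices contains `k` pairwise
vertex-disjoint copies of `P_n`, or its complement contains `J_4`. -/
theorem kPath_or_J4 (n k : ℕ) (hn : 5 ≤ n) (hk : 1 ≤ k) (F : SimpleGraph (Fin (k * n + 1))) :
    Contains (kCopies k (pathGraph n)) F ∨ Contains (jahangir 2) Fᶜ := by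
  clear hk
  induction k with
  | zero =>
    left
    exact ⟨fun x => x.1.elim0, fun a b h => a.1.elim0, fun a b h => a.1.elim0⟩
  | succ k ih =>
    by_cases hJ : Contains (jahangir 2) Fᶜ
    · right; exact hJ
    left
    have hring : (k + 1) * n = k * n + n := by ring
    have h1 : n + 1 ≤ (k + 1) * n + 1 := by omega
    -- first block embedding
    set e1 : Fin (n + 1) → Fin ((k + 1) * n + 1) := fun i => ⟨i.val, by omega⟩ with he1
    have he1inj : Function.Injective e1 := by
      intro a b h
      have := congrArg Fin.val h
      exact Fin.ext this
    -- find one path on the first n+1 vertices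
    have hJ1 : ¬ Contains (jahangir 2) (F.comap e1)ᶜ := fun h => hJ (transfer_compl he1inj h)
    obtain ⟨p, pinj, padj⟩ := core n hn (F.comap e1) hJ1
    -- the unused vertices
    set used : Finset (Fin ((k + 1) * n + 1)) := Finset.image (fun a => e1 (p a)) Finset.univ with husd
    have husedcard : used.card = n := by
      rw [husd, Finset.card_image_of_injective _
        (show Function.Injective fun a => e1 (p a) from fun a b h => pinj (he1inj h)),
        Finset.card_univ, Fintype.card_fin]
    set T : Finset (Fin ((k + 1) * n + 1)) := Finset.univ \ used with hT
    have hTcard : T.card = k * n + 1 := by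
      rw [hT, Finset.card_sdiff_of_subset (Finset.subset_univ _), Finset.card_univ, Fintype.card_fin,
        husedcard]
      omega
    set e2 : Fin (k * n + 1) → Fin ((k + 1) * n + 1) :=
      fun i => ((T.equivFin.symm (Fin.cast hTcard.symm i)) : _).val with he2
    have he2inj : Function.Injective e2 := by
      intro a b h
      have h2 : T.equivFin.symm (Fin.cast hTcard.symm a) = T.equivFin.symm (Fin.cast hTcard.symm b) :=
        Subtype.ext h
      have h3 := T.equivFin.symm.injective h2
      have h4 := congrArg Fin.val h3
      exact Fin.ext h4
    have he2mem : ∀ i, e2 i ∈ T := fun i => (T.equivFin.symm (Fin.cast hTcard.symm i)).2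
    -- apply the induction hypothesis on the rest
    rcases ih (F.comap e2) with h | h
    · obtain ⟨q, qinj, qadj⟩ := h
      refine ⟨fun x => if h : x.1.val < k then e2 (q (⟨x.1.val, h⟩, x.2)) else e1 (p x.2),
        ?_, ?_⟩
      · rintro ⟨i, a2⟩ ⟨j, b2⟩ heq
        dsimp only at heq
        have hmem : ∀ (a2' : Fin n), e1 (p a2') ∉ T := by
          intro a2'
          rw [hT, Finset.mem_sdiff]
          intro hcon
          exact hcon.2 (by rw [husd]; exact Finset.mem_image_of_mem _ (Finset.mem_univ a2'))
        split_ifs at heq with hi hj hj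
        · have h2 := qinj (he2inj heq)
          have h3 : i = j := by
            have := congrArg (fun z => (z.1 : Fin k).val) h2
            exact Fin.ext this
          have h4 : a2 = b2 := congrArg Prod.snd h2
          simp [h3, h4]
        · exact absurd (heq ▸ he2mem _) (hmem b2)
        · exact absurd (heq ▸ hmem a2) (fun hc => hc (he2mem _))
        · have h2 : p a2 = p b2 := he1inj heq
          have h3 : i = j := by
            have : i.val = k := by omega
            have h4 : j.val = k := by omega
            exact Fin.ext (by omega)
          simp [h3, pinj h2]
      · rintro ⟨i, a2⟩ ⟨j, b2⟩ hab
        obtain ⟨h1', h2'⟩ := hab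
        dsimp only at h1' h2' ⊢
        subst h1'
        by_cases hi : i.val < k
        · rw [dif_pos hi, dif_pos hi]
          exact qadj (a := (⟨i.val, hi⟩, a2)) (b := (⟨i.val, hi⟩, b2)) ⟨rfl, h2'⟩
        · rw [dif_neg hi, dif_neg hi]
          exact padj h2'
    · exact absurd (transfer_compl he2inj h) hJ
end
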